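/- Let q ∈ (0,1) and suppose λ₁ ≥ λ₂ > 0 with λ₂ ≥ β(q)λ₁ where β(q) = 2(1 - √(1 - √(1-q²)))/√(1-q²) - 1. Set H = λ₁ + λ₂ and K = λ₁λ₂. Then (16/q²)K² + (1 - 1/q²)H⁴ ≥ 0. -/

import Mathlib

theorem B1_nonneg (q lam1 lam2 : ℝ) (hq : q ∈ Set.Ioo (0 : ℝ) 1)
    (h21 : lam2 ≤ lam1) (h2 : 0 < lam2)
    (hpinch : (2 * ((1 - Real.sqrt (1 - Real.sqrt (1 - q ^ 2))) / Real.sqrt (1 - q ^ 2)) - 1)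
        * lam1 ≤ lam2) :
    (16 / q ^ 2) * (lam1 * lam2) ^ 2 + (1 - 1 / q ^ 2) * (lam1 + lam2) ^ 4 ≥ 0 := by
  obtain ⟨hq0, hq1⟩ := hq
  set s := Real.sqrt (1 - q ^ 2) with hs
  set t := Real.sqrt (1 - s) with ht
  have hq2 : (0:ℝ) < q ^ 2 := by positivity
  have hq2lt : q ^ 2 < 1 := by nlinarith
  have hs0 : 0 < s := Real.sqrt_pos.mpr (by linarith)
  have hssq : s ^ 2 = 1 - q ^ 2 := Real.sq_sqrt (by linarith)
  have hs1 : s < 1 := by nlinarith [hssq, hs0]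
  have ht0 : 0 ≤ t := Real.sqrt_nonneg _
  have htsq : t ^ 2 = 1 - s := Real.sq_sqrt (by linarith)
  have ht1 : t < 1 := by nlinarith [htsq, ht0]
  -- pinching bound multiplied through by s
  have h1 : (2 - 2*t - s) * lam1 ≤ s * lam2 := by
    have h := mul_le_mul_of_nonneg_left hpinch hs0.le
    have hrw : s * ((2 * ((1 - t) / s) - 1) * lam1) = (2 - 2*t - s) * lam1 := by
      field_simp
    linarith [hrw ▸ h]
  have hfac2 : 0 ≤ (2 - s + 2*t) * lam1 - s * lam2 := by nlinarith
  have hprod : 0 ≤ (s * lam2 - (2 - 2*t - s) * lam1) * ((2 - s + 2*t) * lam1 - s * lam2) :=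
    mul_nonneg (by linarith) hfac2
  have hexp : (s * lam2 - (2 - 2*t - s) * lam1) * ((2 - s + 2*t) * lam1 - s * lam2)
      = s * (4 * (lam1 * lam2) - s * (lam1 + lam2) ^ 2) := by
    linear_combination (4 * lam1 ^ 2) * htsq
  have key : 0 ≤ 4 * (lam1 * lam2) - s * (lam1 + lam2) ^ 2 := by
    have h := hexp ▸ hprod
    exact le_of_mul_le_mul_left (by rw [mul_zero]; linarith) hs0
  have h4 : 0 ≤ 4 * (lam1 * lam2) + s * (lam1 + lam2) ^ 2 := by
    nlinarith [mul_pos (lt_of_lt_of_le h2 h21) h2, mul_nonneg hs0.le (sq_nonneg (lam1 + lam2))]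
  have key2 : 0 ≤ 16 * (lam1 * lam2) ^ 2 - s ^ 2 * ((lam1 + lam2) ^ 4) := by
    nlinarith [mul_nonneg key h4]
  have heq : (16 / q ^ 2) * (lam1 * lam2) ^ 2 + (1 - 1 / q ^ 2) * (lam1 + lam2) ^ 4
      = (16 * (lam1 * lam2) ^ 2 - s ^ 2 * ((lam1 + lam2) ^ 4)) / q ^ 2 := by
    rw [hssq]; field_simp; ring
  rw [heq]
  positivity
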